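/- arXiv:0805.4222 — 6 statements merged into one kernel-verified Lean document; each statement's English description precedes it below -/
import Mathlib

section
/- Let n ≥ 2, let G be a group, and let g_1, …, g_{n−1} ∈ G satisfy the braid relations: g_i g_{i+1} g_i = g_{i+1} g_i g_{i+1} for 1 ≤ i ≤ n−2, and g_i g_j = g_j g_i whenever |i−j| ≥ 2. Then for all indices 1 ≤ i, j, k, l ≤ n−1 with |i−j| ≥ 2 and |k−l| ≥ 2, there exists an element z of the subgroup of G generated by g_1, …, g_{n−1} such that z g_i z^{−1} = g_k and z g_j z^{−1} = g_l. -/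
private lemma braidAux_abs (p q : ℕ) (h : p + 2 ≤ q) : 2 ≤ |(p:ℤ) - q| := by
  rw [abs_sub_comm, abs_of_nonneg (by push_cast; omega)]
  push_cast; omega

private lemma braidAux_step {G : Type*} [Group G] (a b : G) (h : a * b * a = b * a * b) :
    (a * b)⁻¹ * b * ((a * b)⁻¹)⁻¹ = a := by
  have h' : b * (a * b) = a * (b * a) := by
    simp only [← mul_assoc]; rw [h]
  rw [inv_inv]
  calc (a*b)⁻¹ * b * (a*b) = b⁻¹ * (a⁻¹ * (b * (a * b))) := by group
  _ = b⁻¹ * (a⁻¹ * (a * (b * a))) := by rw [h']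
  _ = a := by group

private lemma braidAux_fix {G : Type*} [Group G] (u v x : G)
    (hu : u * x = x * u) (hv : v * x = x * v) :
    (u * v)⁻¹ * x * ((u * v)⁻¹)⁻¹ = x := by
  have h : x * (u * v) = (u * v) * x := by
    rw [← mul_assoc, ← hu, mul_assoc, ← hv, ← mul_assoc]
  rw [inv_inv, mul_assoc, h, ← mul_assoc, inv_mul_cancel, one_mul]

private lemma braidAux_comp {G : Type*} [Group G] (w z x : G) :
    (w * z) * x * (w * z)⁻¹ = w * (z * x * z⁻¹) * w⁻¹ := by group

private lemma braidAux_delta {G : Type*} [Group G] (a b c : G)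
    (h1 : a * b * a = b * a * b) (h2 : b * c * b = c * b * c) (h3 : a * c = c * a) :
    (a*b*c*a*b*a) * a * (a*b*c*a*b*a)⁻¹ = c ∧ (a*b*c*a*b*a) * c * (a*b*c*a*b*a)⁻¹ = a := by
  have e1 : ∀ x : G, a * (b * (a * x)) = b * (a * (b * x)) := fun x => by
    rw [← mul_assoc, ← mul_assoc, h1, mul_assoc, mul_assoc]
  have e1r : ∀ x : G, b * (a * (b * x)) = a * (b * (a * x)) := fun x => (e1 x).symm
  have e2 : ∀ x : G, b * (c * (b * x)) = c * (b * (c * x)) := fun x => by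
    rw [← mul_assoc, ← mul_assoc, h2, mul_assoc, mul_assoc]
  have e2r : ∀ x : G, c * (b * (c * x)) = b * (c * (b * x)) := fun x => (e2 x).symm
  have e3 : ∀ x : G, a * (c * x) = c * (a * x) := fun x => by
    rw [← mul_assoc, h3, mul_assoc]
  have e3r : ∀ x : G, c * (a * x) = a * (c * x) := fun x => (e3 x).symm
  constructor
  · rw [mul_inv_eq_iff_eq_mul]
    simp only [mul_assoc]
    rw [e1, e2, e3]
  · rw [mul_inv_eq_iff_eq_mul]
    simp only [mul_assoc]
    rw [h3, e3r, e2r, e1r, e3]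

private lemma braidAux_down (n : ℕ) {G : Type*} [Group G] (g : ℕ → G)
    (hbraid : ∀ i, 1 ≤ i → i ≤ n - 2 →
      g i * g (i + 1) * g i = g (i + 1) * g i * g (i + 1))
    (hcomm : ∀ i j, 1 ≤ i → i ≤ n - 1 → 1 ≤ j → j ≤ n - 1 →
      2 ≤ |(i : ℤ) - (j : ℤ)| → g i * g j = g j * g i) :
    ∀ i, 1 ≤ i → i ≤ n - 1 → ∀ j, 1 ≤ j → j ≤ n - 1 → i + 2 ≤ j →
    ∃ z ∈ Subgroup.closure {x : G | ∃ m, 1 ≤ m ∧ m ≤ n - 1 ∧ x = g m},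
      z * g i * z⁻¹ = g 1 ∧ z * g j * z⁻¹ = g j := by
  intro i hi
  induction i, hi using Nat.le_induction with
  | base =>
    intro _ j _ _ _
    exact ⟨1, Subgroup.one_mem _, by simp, by simp⟩
  | succ i hi ih =>
    intro hi2 j hj1 hj2 hij
    have hbi : g i * g (i+1) * g i = g (i+1) * g i * g (i+1) :=
      hbraid i hi (by omega)
    set z0 : G := (g i * g (i+1))⁻¹ with hz0
    have hz0mem : z0 ∈ Subgroup.closure {x : G | ∃ m, 1 ≤ m ∧ m ≤ n - 1 ∧ x = g m} := by
      exact Subgroup.inv_mem _ (Subgroup.mul_mem _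
        (Subgroup.subset_closure ⟨i, hi, by omega, rfl⟩)
        (Subgroup.subset_closure ⟨i+1, by omega, by omega, rfl⟩))
    have hstep : z0 * g (i+1) * z0⁻¹ = g i := braidAux_step _ _ hbi
    have hfix : z0 * g j * z0⁻¹ = g j := by
      refine braidAux_fix _ _ _ ?_ ?_
      · exact hcomm i j hi (by omega) hj1 hj2 (braidAux_abs i j (by omega))
      · exact hcomm (i+1) j (by omega) (by omega) hj1 hj2 (braidAux_abs (i+1) j (by omega))
    obtain ⟨z', hz'mem, hz'1, hz'2⟩ := ih (by omega) j hj1 hj2 (by omega)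
    refine ⟨z' * z0, Subgroup.mul_mem _ hz'mem hz0mem, ?_, ?_⟩
    · rw [braidAux_comp, hstep, hz'1]
    · rw [braidAux_comp, hfix, hz'2]

private lemma braidAux_down2 (n : ℕ) {G : Type*} [Group G] (g : ℕ → G)
    (hbraid : ∀ i, 1 ≤ i → i ≤ n - 2 →
      g i * g (i + 1) * g i = g (i + 1) * g i * g (i + 1))
    (hcomm : ∀ i j, 1 ≤ i → i ≤ n - 1 → 1 ≤ j → j ≤ n - 1 →
      2 ≤ |(i : ℤ) - (j : ℤ)| → g i * g j = g j * g i) :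
    ∀ j, 3 ≤ j → j ≤ n - 1 →
    ∃ z ∈ Subgroup.closure {x : G | ∃ m, 1 ≤ m ∧ m ≤ n - 1 ∧ x = g m},
      z * g 1 * z⁻¹ = g 1 ∧ z * g j * z⁻¹ = g 3 := by
  intro j hj
  induction j, hj using Nat.le_induction with
  | base =>
    intro _
    exact ⟨1, Subgroup.one_mem _, by simp, by simp⟩
  | succ j hj ih =>
    intro hj2
    have hbj : g j * g (j+1) * g j = g (j+1) * g j * g (j+1) :=
      hbraid j (by omega) (by omega)
    set z0 : G := (g j * g (j+1))⁻¹ with hz0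
    have hz0mem : z0 ∈ Subgroup.closure {x : G | ∃ m, 1 ≤ m ∧ m ≤ n - 1 ∧ x = g m} := by
      exact Subgroup.inv_mem _ (Subgroup.mul_mem _
        (Subgroup.subset_closure ⟨j, by omega, by omega, rfl⟩)
        (Subgroup.subset_closure ⟨j+1, by omega, by omega, rfl⟩))
    have hstep : z0 * g (j+1) * z0⁻¹ = g j := braidAux_step _ _ hbj
    have hfix : z0 * g 1 * z0⁻¹ = g 1 := by
      refine braidAux_fix _ _ _ ?_ ?_
      · exact hcomm j 1 (by omega) (by omega) (by omega) (by omega)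
          (by rw [abs_sub_comm]; exact braidAux_abs 1 j (by omega))
      · exact hcomm (j+1) 1 (by omega) (by omega) (by omega) (by omega)
          (by rw [abs_sub_comm]; exact braidAux_abs 1 (j+1) (by omega))
    obtain ⟨z', hz'mem, hz'1, hz'2⟩ := ih (by omega)
    refine ⟨z' * z0, Subgroup.mul_mem _ hz'mem hz0mem, ?_, ?_⟩
    · rw [braidAux_comp, hfix, hz'1]
    · rw [braidAux_comp, hstep, hz'2]

private lemma braidAux_toBase (n : ℕ) {G : Type*} [Group G] (g : ℕ → G)
    (hbraid : ∀ i, 1 ≤ i → i ≤ n - 2 →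
      g i * g (i + 1) * g i = g (i + 1) * g i * g (i + 1))
    (hcomm : ∀ i j, 1 ≤ i → i ≤ n - 1 → 1 ≤ j → j ≤ n - 1 →
      2 ≤ |(i : ℤ) - (j : ℤ)| → g i * g j = g j * g i)
    (i j : ℕ) (hi1 : 1 ≤ i) (hi2 : i ≤ n - 1) (hj1 : 1 ≤ j) (hj2 : j ≤ n - 1)
    (hij : 2 ≤ |(i : ℤ) - (j : ℤ)|) :
    ∃ z ∈ Subgroup.closure {x : G | ∃ m, 1 ≤ m ∧ m ≤ n - 1 ∧ x = g m},
      z * g i * z⁻¹ = g 1 ∧ z * g j * z⁻¹ = g 3 := by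
  have hcase : i + 2 ≤ j ∨ j + 2 ≤ i := by
    rcases le_abs.mp hij with h | h
    · right; omega
    · left; omega
  have hn4 : 4 ≤ n := by omega
  rcases hcase with h | h
  · obtain ⟨z1, hz1mem, hz11, hz12⟩ :=
      braidAux_down n g hbraid hcomm i hi1 hi2 j hj1 hj2 h
    obtain ⟨z2, hz2mem, hz21, hz22⟩ :=
      braidAux_down2 n g hbraid hcomm j (by omega) hj2
    refine ⟨z2 * z1, Subgroup.mul_mem _ hz2mem hz1mem, ?_, ?_⟩
    · rw [braidAux_comp, hz11, hz21]
    · rw [braidAux_comp, hz12, hz22]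
  · obtain ⟨z1, hz1mem, hz11, hz12⟩ :=
      braidAux_down n g hbraid hcomm j hj1 hj2 i hi1 hi2 h
    obtain ⟨z2, hz2mem, hz21, hz22⟩ :=
      braidAux_down2 n g hbraid hcomm i (by omega) hi2
    have h1 : g 1 * g 2 * g 1 = g 2 * g 1 * g 2 := hbraid 1 le_rfl (by omega)
    have h2 : g 2 * g 3 * g 2 = g 3 * g 2 * g 3 := hbraid 2 (by omega) (by omega)
    have h3 : g 1 * g 3 = g 3 * g 1 :=
      hcomm 1 3 (by omega) (by omega) (by omega) (by omega) (by norm_num)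
    obtain ⟨hd1, hd2⟩ := braidAux_delta (g 1) (g 2) (g 3) h1 h2 h3
    set d : G := g 1 * g 2 * g 3 * g 1 * g 2 * g 1 with hd
    have hdmem : d ∈ Subgroup.closure {x : G | ∃ m, 1 ≤ m ∧ m ≤ n - 1 ∧ x = g m} := by
      have m1 := Subgroup.subset_closure (k := {x : G | ∃ m, 1 ≤ m ∧ m ≤ n - 1 ∧ x = g m})
        (show g 1 ∈ _ from ⟨1, by omega, by omega, rfl⟩)
      have m2 := Subgroup.subset_closure (k := {x : G | ∃ m, 1 ≤ m ∧ m ≤ n - 1 ∧ x = g m})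
        (show g 2 ∈ _ from ⟨2, by omega, by omega, rfl⟩)
      have m3 := Subgroup.subset_closure (k := {x : G | ∃ m, 1 ≤ m ∧ m ≤ n - 1 ∧ x = g m})
        (show g 3 ∈ _ from ⟨3, by omega, by omega, rfl⟩)
      exact Subgroup.mul_mem _ (Subgroup.mul_mem _ (Subgroup.mul_mem _
        (Subgroup.mul_mem _ (Subgroup.mul_mem _ m1 m2) m3) m1) m2) m1
    refine ⟨d * (z2 * z1), Subgroup.mul_mem _ hdmem (Subgroup.mul_mem _ hz2mem hz1mem), ?_, ?_⟩
    · rw [braidAux_comp d (z2 * z1), braidAux_comp z2 z1, hz12, hz22, hd2]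
    · rw [braidAux_comp d (z2 * z1), braidAux_comp z2 z1, hz11, hz21, hd1]

/-- Lemma 2.6: all ordered pairs of distant braid generators are
simultaneously conjugate by an element of the subgroup generated by the
images of the generators. -/
theorem braid_distant_pairs_conjugate
    (n : ℕ) (hn : 2 ≤ n) (G : Type*) [Group G] (g : ℕ → G)
    (hbraid : ∀ i, 1 ≤ i → i ≤ n - 2 →
      g i * g (i + 1) * g i = g (i + 1) * g i * g (i + 1))
    (hcomm : ∀ i j, 1 ≤ i → i ≤ n - 1 → 1 ≤ j → j ≤ n - 1 →
      2 ≤ |(i : ℤ) - (j : ℤ)| → g i * g j = g j * g i)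
    (i j k l : ℕ) (hi1 : 1 ≤ i) (hi2 : i ≤ n - 1) (hj1 : 1 ≤ j) (hj2 : j ≤ n - 1)
    (hk1 : 1 ≤ k) (hk2 : k ≤ n - 1) (hl1 : 1 ≤ l) (hl2 : l ≤ n - 1)
    (hij : 2 ≤ |(i : ℤ) - (j : ℤ)|) (hkl : 2 ≤ |(k : ℤ) - (l : ℤ)|) :
    ∃ z ∈ Subgroup.closure {x : G | ∃ m, 1 ≤ m ∧ m ≤ n - 1 ∧ x = g m},
      z * g i * z⁻¹ = g k ∧ z * g j * z⁻¹ = g l := by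
  obtain ⟨z1, hz1mem, hz11, hz12⟩ :=
    braidAux_toBase n g hbraid hcomm i j hi1 hi2 hj1 hj2 hij
  obtain ⟨z2, hz2mem, hz21, hz22⟩ :=
    braidAux_toBase n g hbraid hcomm k l hk1 hk2 hl1 hl2 hkl
  have hk : z2⁻¹ * g 1 * (z2⁻¹)⁻¹ = g k := by
    rw [← hz21]; group
  have hl : z2⁻¹ * g 3 * (z2⁻¹)⁻¹ = g l := by
    rw [← hz22]; group
  refine ⟨z2⁻¹ * z1, Subgroup.mul_mem _ (Subgroup.inv_mem _ hz2mem) hz1mem, ?_, ?_⟩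
  · rw [braidAux_comp, hz11, hk]
  · rw [braidAux_comp, hz12, hl]
end

section
/- Let n ≥ 2, let π : G → H be a surjective group homomorphism whose kernel is contained in the center of G (a central extension), and let g_1, …, g_{n−1} ∈ G satisfy the braid relations: g_i g_{i+1} g_i = g_{i+1} g_i g_{i+1} for 1 ≤ i ≤ n−2, and g_i g_j = g_j g_i whenever |i−j| ≥ 2. If π(g_1) = π(g_2) = ⋯ = π(g_{n−1}), then g_1 = g_2 = ⋯ = g_{n−1}. -/
/-- Lemma 2.7: if the images of the braid generators under a central
extension `π : G → H` are all equal, then the generators themselves are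
all equal. -/
theorem braid_constant_of_constant_mod_center
    (n : ℕ) (hn : 2 ≤ n) (G H : Type*) [Group G] [Group H]
    (π : G →* H) (hsurj : Function.Surjective π)
    (hcentral : π.ker ≤ Subgroup.center G)
    (g : ℕ → G)
    (hbraid : ∀ i, 1 ≤ i → i ≤ n - 2 →
      g i * g (i + 1) * g i = g (i + 1) * g i * g (i + 1))
    (hcomm : ∀ i j, 1 ≤ i → i ≤ n - 1 → 1 ≤ j → j ≤ n - 1 →
      2 ≤ |(i : ℤ) - (j : ℤ)| → g i * g j = g j * g i)
    (hconst : ∀ i j, 1 ≤ i → i ≤ n - 1 → 1 ≤ j → j ≤ n - 1 →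
      π (g i) = π (g j)) :
    ∀ i j, 1 ≤ i → i ≤ n - 1 → 1 ≤ j → j ≤ n - 1 → g i = g j := by
  -- adjacent generators are equal
  have key : ∀ i, 1 ≤ i → i ≤ n - 2 → g i = g (i + 1) := by
    intro i hi hi2
    have hi1 : i ≤ n - 1 := by omega
    have hi1' : i + 1 ≤ n - 1 := by omega
    set a : G := g i with ha_def
    set z : G := a⁻¹ * g (i + 1) with hz_def
    have hπz : z ∈ π.ker := by
      have h := hconst i (i + 1) hi hi1 (by omega) hi1'
      simp [MonoidHom.mem_ker, hz_def, ha_def, h]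
    have hz : ∀ b : G, z * b = b * z := fun b =>
      (Subgroup.mem_center_iff.mp (hcentral hπz) b).symm
    have hgz : g (i + 1) = a * z := by simp [hz_def]
    have hb := hbraid i hi hi2
    rw [hgz] at hb
    have c1 : z * a = a * z := hz a
    have lhs : a * (a * z) * a = a * a * a * z := by
      rw [show a * (a * z) * a = a * a * (z * a) by group, c1]; group
    have rhs : (a * z) * a * (a * z) = a * a * a * (z * z) := by
      rw [show (a * z) * a * (a * z) = a * (z * a) * (a * z) by group, c1,
          show a * (a * z) * (a * z) = a * a * (z * a) * z by group, c1]
      group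
    have hb' : a * a * a * z = a * a * a * (z * z) := lhs ▸ rhs ▸ hb
    have hzz : z = z * z := mul_left_cancel hb'
    have hz1 : z = 1 := by
      have h1 : z * 1 = z * z := by simpa using hzz
      exact (mul_left_cancel h1).symm
    rw [hgz, hz1, mul_one]
  -- all generators equal g 1
  have all1 : ∀ i, 1 ≤ i → i ≤ n - 1 → g i = g 1 := by
    intro i
    induction i with
    | zero => intro h; omega
    | succ k ih =>
      intro h1 h2
      by_cases hk : k = 0
      · subst hk; rfl
      · have hk1 : 1 ≤ k := by omega
        have hk2 : k ≤ n - 2 := by omega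
        rw [← key k hk1 hk2]
        exact ih hk1 (by omega)
  intro i j hi hi' hj hj'
  rw [all1 i hi hi', all1 j hj hj']
end

section
/- Let n ≥ 2, let π : G → H be a surjective group homomorphism whose kernel is contained in the center of G (a central extension), and let h_1, …, h_{n−1} ∈ H satisfy the braid relations: h_i h_{i+1} h_i = h_{i+1} h_i h_{i+1} for 1 ≤ i ≤ n−2, and h_i h_j = h_j h_i whenever |i−j| ≥ 2. Suppose that for some pair i, j with |i−j| ≥ 2 there exist elements u, v ∈ G with π(u) = h_i, π(v) = h_j, and u v = v u. Then there exist elements g_1, …, g_{n−1} ∈ G satisfying the braid relations (g_i g_{i+1} g_i = g_{i+1} g_i g_{i+1} for 1 ≤ i ≤ n−2 and g_i g_j = g_j g_i for |i−j| ≥ 2) with π(g_i) = h_i for all i; that is, the corresponding homomorphism B_n → H lifts to a homomorphism B_n → G. -/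
private def braidLiftSeq {G : Type*} [Group G] (t : ℕ → G) : ℕ → G
  | 0 => 1
  | 1 => t 1
  | (k+2) =>
      braidLiftSeq t (k+1) * t (k+2) * braidLiftSeq t (k+1) *
        (braidLiftSeq t (k+1) * t (k+2))⁻¹

private lemma braidLiftSeq_one {G : Type*} [Group G] (t : ℕ → G) :
    braidLiftSeq t 1 = t 1 := rfl

private lemma braidLiftSeq_succ {G : Type*} [Group G] (t : ℕ → G) (k : ℕ) :
    braidLiftSeq t (k+1+1) =
      braidLiftSeq t (k+1) * t (k+1+1) * braidLiftSeq t (k+1) *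
        (braidLiftSeq t (k+1) * t (k+1+1))⁻¹ := rfl

private lemma braid_step {G : Type*} [Group G] (a t k : G)
    (hk : a * t * a = t * a * t * k) (hc : ∀ x : G, k * x = x * k) :
    a * (a * t * a * (a * t)⁻¹) * a =
      (a * t * a * (a * t)⁻¹) * a * (a * t * a * (a * t)⁻¹) := by
  have L : a * (a * t * a * (a * t)⁻¹) * a = t * a * t * (k * k) := by
    rw [show a * (a * t * a * (a * t)⁻¹) * a = a * (a * t * a) * t⁻¹ by group, hk,
      show a * (t * a * t * k) * t⁻¹ = a * t * a * (t * (k * t⁻¹)) by group, hc t⁻¹,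
      show a * t * a * (t * (t⁻¹ * k)) = a * t * a * k by group, hk]
    group
  have R : (a * t * a * (a * t)⁻¹) * a * (a * t * a * (a * t)⁻¹) = t * a * t * (k * k) := by
    rw [show (a * t * a * (a * t)⁻¹) * a * (a * t * a * (a * t)⁻¹)
        = a * t * (a * t⁻¹ * (a * t * a) * (t⁻¹ * a⁻¹)) by group, hk,
      show a * t * (a * t⁻¹ * (t * a * t * k) * (t⁻¹ * a⁻¹))
        = a * t * a * (a * t * (k * (t⁻¹ * a⁻¹))) by group, hc (t⁻¹ * a⁻¹),
      show a * t * a * (a * t * ((t⁻¹ * a⁻¹) * k)) = a * t * a * k by group, hk]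
    group
  rw [L, R]

private lemma comm_of_comm_lifts {G H : Type*} [Group G] [Group H] (π : G →* H)
    (hcentral : π.ker ≤ Subgroup.center G) {u v x y : G}
    (hu : π u = π x) (hv : π v = π y) (huv : u * v = v * u) : x * y = y * x := by
  have hcmem : u⁻¹ * x ∈ Subgroup.center G :=
    hcentral (by simp [MonoidHom.mem_ker, hu])
  have hdmem : v⁻¹ * y ∈ Subgroup.center G :=
    hcentral (by simp [MonoidHom.mem_ker, hv])
  have hc : ∀ g : G, g * (u⁻¹ * x) = (u⁻¹ * x) * g := Subgroup.mem_center_iff.mp hcmem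
  have hd : ∀ g : G, g * (v⁻¹ * y) = (v⁻¹ * y) * g := Subgroup.mem_center_iff.mp hdmem
  calc x * y = u * ((u⁻¹ * x) * v) * (v⁻¹ * y) := by group
    _ = u * (v * (u⁻¹ * x)) * (v⁻¹ * y) := by rw [← hc v]
    _ = (u * v) * ((u⁻¹ * x) * (v⁻¹ * y)) := by group
    _ = (v * u) * ((u⁻¹ * x) * (v⁻¹ * y)) := by rw [huv]
    _ = v * ((u * (u⁻¹ * x)) * (v⁻¹ * y)) := by group
    _ = v * ((v⁻¹ * y) * (u * (u⁻¹ * x))) := by rw [hd (u * (u⁻¹ * x))]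
    _ = y * x := by group

private lemma conj_fix {G : Type*} [Group G] {x y z : G}
    (hx : x * z = z * x) (hy : y * z = z * y) :
    (x * y) * z * (x * y)⁻¹ = z := by
  have h1 : (x * y) * z = z * (x * y) := by
    rw [mul_assoc, hy, ← mul_assoc, hx, mul_assoc]
  rw [h1]; group

private def CommLift {G H : Type*} [Group G] [Group H] (π : G →* H) (h : ℕ → H)
    (a b : ℕ) : Prop :=
  ∃ u v : G, π u = h a ∧ π v = h b ∧ u * v = v * u

private lemma CommLift.conj {G H : Type*} [Group G] [Group H] (π : G →* H)
    (hsurj : Function.Surjective π) {h : ℕ → H} {a b a' b' : ℕ} (w : H)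
    (ha : w * h a * w⁻¹ = h a') (hb : w * h b * w⁻¹ = h b') :
    CommLift π h a b → CommLift π h a' b' := by
  rintro ⟨u, v, hu, hv, huv⟩
  obtain ⟨W, hW⟩ := hsurj w
  refine ⟨W * u * W⁻¹, W * v * W⁻¹, ?_, ?_, ?_⟩
  · rw [map_mul, map_mul, map_inv, hW, hu]; exact ha
  · rw [map_mul, map_mul, map_inv, hW, hv]; exact hb
  · rw [show W * u * W⁻¹ * (W * v * W⁻¹) = W * (u * v) * W⁻¹ by group, huv]
    group

private lemma CommLift.symm {G H : Type*} [Group G] [Group H] {π : G →* H}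
    {h : ℕ → H} {a b : ℕ} : CommLift π h a b → CommLift π h b a := by
  rintro ⟨u, v, hu, hv, huv⟩; exact ⟨v, u, hv, hu, huv.symm⟩

/-- Proposition 2.8: a representation of the braid group to `H` lifts
through a central extension `π : G → H` provided some pair of distant
generators has commuting lifts. -/
theorem braid_lift_of_commuting_lifts
    (n : ℕ) (hn : 2 ≤ n) (G H : Type*) [Group G] [Group H]
    (π : G →* H) (hsurj : Function.Surjective π)
    (hcentral : π.ker ≤ Subgroup.center G)
    (h : ℕ → H)
    (hbraid : ∀ i, 1 ≤ i → i ≤ n - 2 →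
      h i * h (i + 1) * h i = h (i + 1) * h i * h (i + 1))
    (hcomm : ∀ i j, 1 ≤ i → i ≤ n - 1 → 1 ≤ j → j ≤ n - 1 →
      2 ≤ |(i : ℤ) - (j : ℤ)| → h i * h j = h j * h i)
    (i j : ℕ) (hi1 : 1 ≤ i) (hi2 : i ≤ n - 1) (hj1 : 1 ≤ j) (hj2 : j ≤ n - 1)
    (hij : 2 ≤ |(i : ℤ) - (j : ℤ)|)
    (u v : G) (hu : π u = h i) (hv : π v = h j) (huv : u * v = v * u) :
    ∃ g : ℕ → G,
      (∀ i, 1 ≤ i → i ≤ n - 2 →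
        g i * g (i + 1) * g i = g (i + 1) * g i * g (i + 1)) ∧
      (∀ i j, 1 ≤ i → i ≤ n - 1 → 1 ≤ j → j ≤ n - 1 →
        2 ≤ |(i : ℤ) - (j : ℤ)| → g i * g j = g j * g i) ∧
      (∀ i, 1 ≤ i → i ≤ n - 1 → π (g i) = h i) := by
  classical
  set s : H → G := Function.surjInv hsurj with hs_def
  have hs : ∀ x, π (s x) = x := fun x => Function.surjInv_eq hsurj x
  have hdisj : i + 2 ≤ j ∨ j + 2 ≤ i := by
    rcases le_total ((i : ℤ) - (j : ℤ)) 0 with hl | hl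
    · rw [abs_of_nonpos hl] at hij; omega
    · rw [abs_of_nonneg hl] at hij; omega
  have hn4 : 4 ≤ n := by omega
  have habs : ∀ a c : ℕ, a + 2 ≤ c ∨ c + 2 ≤ a → 2 ≤ |(a : ℤ) - (c : ℤ)| := by
    intro a c hac
    rcases hac with hac | hac
    · rw [abs_of_nonpos (show (a : ℤ) - (c : ℤ) ≤ 0 by omega)]; omega
    · rw [abs_of_nonneg (show (0 : ℤ) ≤ (a : ℤ) - (c : ℤ) by omega)]; omega
  have hcomm' : ∀ a c : ℕ, 1 ≤ a → a ≤ n - 1 → 1 ≤ c → c ≤ n - 1 →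
      (a + 2 ≤ c ∨ c + 2 ≤ a) → h a * h c = h c * h a :=
    fun a c h1 h2 h3 h4 h5 => hcomm a c h1 h2 h3 h4 (habs a c h5)
  have conjA : ∀ c, 1 ≤ c → c + 2 ≤ n →
      (h c * h (c + 1)) * h c * (h c * h (c + 1))⁻¹ = h (c + 1) := by
    intro c h1 h2
    have hb := hbraid c h1 (by omega)
    rw [hb]; group
  have conjB : ∀ c, 1 ≤ c → c + 2 ≤ n →
      (h (c + 1) * h c) * h (c + 1) * (h (c + 1) * h c)⁻¹ = h c := by
    intro c h1 h2
    have hb := hbraid c h1 (by omega)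
    rw [show (h (c + 1) * h c) * h (c + 1) = h (c + 1) * h c * h (c + 1) from rfl, ← hb]
    group
  -- moves
  have moveUp : ∀ a c, 1 ≤ a → a ≤ n - 1 → 1 ≤ c → c + 2 ≤ n →
      (a + 2 ≤ c ∨ c + 3 ≤ a) → CommLift π h a c → CommLift π h a (c + 1) := by
    intro a c ha1 ha2 hc1 hc2 hd hP
    have hfix : (h c * h (c + 1)) * h a * (h c * h (c + 1))⁻¹ = h a :=
      conj_fix (hcomm' c a hc1 (by omega) ha1 ha2 (by omega))
        (hcomm' (c + 1) a (by omega) (by omega) ha1 ha2 (by omega))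
    exact CommLift.conj π hsurj (h c * h (c + 1)) hfix (conjA c hc1 hc2) hP
  have moveDown : ∀ a c, 1 ≤ a → a ≤ n - 1 → 1 ≤ c → c + 2 ≤ n →
      (a + 2 ≤ c ∨ c + 3 ≤ a) → CommLift π h a (c + 1) → CommLift π h a c := by
    intro a c ha1 ha2 hc1 hc2 hd hP
    have hfix : (h (c + 1) * h c) * h a * (h (c + 1) * h c)⁻¹ = h a :=
      conj_fix (hcomm' (c + 1) a (by omega) (by omega) ha1 ha2 (by omega))
        (hcomm' c a hc1 (by omega) ha1 ha2 (by omega))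
    exact CommLift.conj π hsurj (h (c + 1) * h c) hfix (conjB c hc1 hc2) hP
  -- chains
  have chainUp : ∀ m a c, 1 ≤ a → a ≤ n - 1 → 1 ≤ c → c + m ≤ n - 1 →
      (a + 2 ≤ c ∨ c + m + 2 ≤ a) → CommLift π h a c → CommLift π h a (c + m) := by
    intro m
    induction m with
    | zero => intro a c _ _ _ _ _ hP; simpa using hP
    | succ m ih =>
        intro a c ha1 ha2 hc1 hcm hd hP
        have h1 : CommLift π h a (c + m) := ih a c ha1 ha2 hc1 (by omega) (by omega) hP
        exact moveUp a (c + m) ha1 ha2 (by omega) (by omega) (by omega) h1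
  have chainDown : ∀ m a c, 1 ≤ a → a ≤ n - 1 → 1 ≤ c → c + m ≤ n - 1 →
      (a + 2 ≤ c ∨ c + m + 2 ≤ a) → CommLift π h a (c + m) → CommLift π h a c := by
    intro m
    induction m with
    | zero => intro a c _ _ _ _ _ hP; simpa using hP
    | succ m ih =>
        intro a c ha1 ha2 hc1 hcm hd hP
        have h1 : CommLift π h a (c + m) :=
          moveDown a (c + m) ha1 ha2 (by omega) (by omega) (by omega) hP
        exact ih a c ha1 ha2 hc1 (by omega) (by omega) h1
  -- base pair, normalized
  have hP0 : CommLift π h i j := ⟨u, v, hu, hv, huv⟩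
  obtain ⟨i0, j0, hi0, hij0, hj0, hP1⟩ :
      ∃ i0 j0, 1 ≤ i0 ∧ i0 + 2 ≤ j0 ∧ j0 ≤ n - 1 ∧ CommLift π h i0 j0 := by
    rcases hdisj with hd | hd
    · exact ⟨i, j, hi1, hd, hj2, hP0⟩
    · exact ⟨j, i, hj1, hd, hi2, hP0.symm⟩
  -- step A : CommLift i0 (n-1)
  have hA : CommLift π h i0 (n - 1) := by
    have := chainUp (n - 1 - j0) i0 j0 hi0 (by omega) (by omega) (by omega)
      (by omega) hP1
    rwa [show j0 + (n - 1 - j0) = n - 1 by omega] at this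
  -- step B : CommLift (n-1) a for all small a
  have hB : ∀ a, 1 ≤ a → a + 3 ≤ n → CommLift π h (n - 1) a := by
    intro a ha1 ha3
    have hsym : CommLift π h (n - 1) i0 := hA.symm
    rcases le_or_gt i0 a with hle | hlt
    · have := chainUp (a - i0) (n - 1) i0 (by omega) (by omega) hi0 (by omega)
        (by omega) hsym
      rwa [show i0 + (a - i0) = a by omega] at this
    · refine chainDown (i0 - a) (n - 1) a (by omega) (by omega) ha1 (by omega)
        (by omega) ?_
      rwa [show a + (i0 - a) = i0 by omega]
  -- step C : all distant pairs
  have hQ : ∀ a b, 1 ≤ a → a + 2 ≤ b → b ≤ n - 1 → CommLift π h a b := by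
    intro a b ha1 hab hb
    have h1 : CommLift π h a (n - 1) := (hB a ha1 (by omega)).symm
    have h2 := chainDown (n - 1 - b) a b ha1 (by omega) (by omega) (by omega)
      (by omega)
    rw [show b + (n - 1 - b) = n - 1 by omega] at h2
    exact h2 h1
  -- the lifts
  set t : ℕ → G := fun m => s (h m) with ht
  have hlift : ∀ m, m + 1 ≤ n - 1 → π (braidLiftSeq t (m + 1)) = h (m + 1) := by
    intro m
    induction m with
    | zero => intro _; rw [braidLiftSeq_one]; exact hs (h 1)
    | succ m ih =>
        intro hm
        have ihm : π (braidLiftSeq t (m + 1)) = h (m + 1) := ih (by omega)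
        rw [braidLiftSeq_succ]
        rw [map_mul, map_mul, map_inv, map_mul, ihm]
        have htm : π (t (m + 1 + 1)) = h (m + 1 + 1) := hs (h (m + 1 + 1))
        rw [htm]
        exact conjA (m + 1) (by omega) (by omega)
  refine ⟨braidLiftSeq t, ?_, ?_, ?_⟩
  · -- braid relations
    intro a ha1 ha2
    obtain ⟨m, rfl⟩ : ∃ m, a = m + 1 := ⟨a - 1, by omega⟩
    have hga : π (braidLiftSeq t (m + 1)) = h (m + 1) := hlift m (by omega)
    have htm : π (t (m + 1 + 1)) = h (m + 1 + 1) := hs (h (m + 1 + 1))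
    set A := braidLiftSeq t (m + 1) with hA'
    set T := t (m + 1 + 1) with hT'
    have hkker : (T * A * T)⁻¹ * (A * T * A) ∈ π.ker := by
      rw [MonoidHom.mem_ker, map_mul, map_inv, map_mul, map_mul, map_mul, map_mul,
        hga, htm]
      rw [hbraid (m + 1) (by omega) (by omega)]
      group
    have hc : ∀ x : G, ((T * A * T)⁻¹ * (A * T * A)) * x
        = x * ((T * A * T)⁻¹ * (A * T * A)) :=
      fun x => (Subgroup.mem_center_iff.mp (hcentral hkker) x).symm
    have hk : A * T * A = T * A * T * ((T * A * T)⁻¹ * (A * T * A)) := by group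
    rw [braidLiftSeq_succ]
    exact braid_step A T ((T * A * T)⁻¹ * (A * T * A)) hk hc
  · -- commuting relations
    intro a b ha1 ha2 hb1 hb2 hab
    have hd : a + 2 ≤ b ∨ b + 2 ≤ a := by
      rcases le_total ((a : ℤ) - (b : ℤ)) 0 with hl | hl
      · rw [abs_of_nonpos hl] at hab; omega
      · rw [abs_of_nonneg hl] at hab; omega
    have hga : π (braidLiftSeq t a) = h a := by
      obtain ⟨m, rfl⟩ : ∃ m, a = m + 1 := ⟨a - 1, by omega⟩
      exact hlift m (by omega)
    have hgb : π (braidLiftSeq t b) = h b := by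
      obtain ⟨m, rfl⟩ : ∃ m, b = m + 1 := ⟨b - 1, by omega⟩
      exact hlift m (by omega)
    rcases hd with hd | hd
    · obtain ⟨u', v', h1, h2, h3⟩ := hQ a b ha1 hd hb2
      exact comm_of_comm_lifts π hcentral (h1.trans hga.symm) (h2.trans hgb.symm) h3
    · obtain ⟨u', v', h1, h2, h3⟩ := hQ b a hb1 hd ha2
      exact comm_of_comm_lifts π hcentral (h2.trans hga.symm) (h1.trans hgb.symm) h3.symm
  · -- lifts
    intro a ha1 ha2
    obtain ⟨m, rfl⟩ : ∃ m, a = m + 1 := ⟨a - 1, by omega⟩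
    exact hlift m (by omega)
end

section
/- Let n ≥ 6, let G be a solvable group, and let g_1, …, g_{n−1} ∈ G satisfy the braid relations: g_i g_{i+1} g_i = g_{i+1} g_i g_{i+1} for 1 ≤ i ≤ n−2, and g_i g_j = g_j g_i whenever |i−j| ≥ 2. Then g_1 = g_2 = ⋯ = g_{n−1}. Equivalently, for n ≥ 6 every homomorphism from the braid group B_n to a solvable group is constant. -/
open scoped commutatorElement

/-- Key computational lemma: if braid generators all lie in one coset of an
abelian conjugation-closed subgroup, they are all equal. -/
lemma braid_key (Q : Type*) [Group Q] (A : Subgroup Q)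
    (hAn : ∀ x ∈ A, ∀ q : Q, q * x * q⁻¹ ∈ A)
    (habel : ∀ x ∈ A, ∀ y ∈ A, x * y = y * x)
    (n : ℕ) (hn : 6 ≤ n) (t : Q) (h : ℕ → Q)
    (hmem : ∀ i, 1 ≤ i → i ≤ n - 1 → h i * t⁻¹ ∈ A)
    (hbraid : ∀ i, 1 ≤ i → i ≤ n - 2 →
      h i * h (i + 1) * h i = h (i + 1) * h i * h (i + 1))
    (hcomm : ∀ i j, 1 ≤ i → i ≤ n - 1 → 1 ≤ j → j ≤ n - 1 →
      2 ≤ |(i : ℤ) - (j : ℤ)| → h i * h j = h j * h i) :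
    ∀ i j, 1 ≤ i → i ≤ n - 1 → 1 ≤ j → j ≤ n - 1 → h i = h j := by
  set a : ℕ → Q := fun i => h i * t⁻¹ with ha_def
  set c : Q → Q := fun x => t * x * t⁻¹ with hc_def
  have hchom : ∀ x y : Q, c (x * y) = c x * c y := by
    intro x y; simp only [hc_def]; group
  have hcA : ∀ x ∈ A, c x ∈ A := fun x hx => hAn x hx t
  -- relation derived from commuting generators
  have E : ∀ i j, 1 ≤ i → i ≤ n - 1 → 1 ≤ j → j ≤ n - 1 →
      2 ≤ |(i : ℤ) - (j : ℤ)| → a i * c (a j) = a j * c (a i) := by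
    intro i j hi hi' hj hj' hd
    have l : ∀ x y : Q, (x * t⁻¹) * (t * (y * t⁻¹) * t⁻¹) * (t * t) = x * y := by
      intro x y; group
    have key : a i * c (a j) * (t * t) = a j * c (a i) * (t * t) := by
      simp only [ha_def, hc_def]
      rw [l, l]
      exact hcomm i j hi hi' hj hj' hd
    exact mul_right_cancel key
  -- relation derived from the braid relation
  have B : ∀ i, 1 ≤ i → i ≤ n - 2 →
      a i * c (a (i+1)) * c (c (a i)) = a (i+1) * c (a i) * c (c (a (i+1))) := by
    intro i hi hi'
    have l : ∀ x y : Q,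
        (x * t⁻¹) * (t * (y * t⁻¹) * t⁻¹) * (t * (t * (x * t⁻¹) * t⁻¹) * t⁻¹) *
          (t * (t * t)) = x * y * x := by
      intro x y; group
    have key : a i * c (a (i+1)) * c (c (a i)) * (t * (t * t)) =
        a (i+1) * c (a i) * c (c (a (i+1))) * (t * (t * t)) := by
      simp only [ha_def, hc_def]
      rw [l, l]
      exact hbraid i hi hi'
    exact mul_right_cancel key
  -- adjacent generators are equal
  have adj : ∀ i, 1 ≤ i → i + 1 ≤ n - 1 → h i = h (i + 1) := by
    intro i hi hi'
    set k : ℕ := if i ≤ 2 then i + 3 else i - 2 with hk_def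
    have hk1 : 1 ≤ k := by simp only [hk_def]; split <;> omega
    have hk2 : k ≤ n - 1 := by simp only [hk_def]; split <;> omega
    have hcast : (k : ℤ) = if i ≤ 2 then (i : ℤ) + 3 else (i : ℤ) - 2 := by
      simp only [hk_def]
      split <;> push_cast <;> omega
    have hdik : 2 ≤ |(i : ℤ) - (k : ℤ)| := by
      rw [hcast]; split <;> rw [le_abs] <;> omega
    have hdik1 : 2 ≤ |((i + 1 : ℕ) : ℤ) - (k : ℤ)| := by
      rw [hcast]; push_cast; split <;> rw [le_abs] <;> omega
    have hi1 : 1 ≤ i + 1 := by omega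
    have hii : i ≤ n - 1 := by omega
    have hin2 : i ≤ n - 2 := by omega
    have hu : a i ∈ A := hmem i hi hii
    have hv : a (i+1) ∈ A := hmem (i+1) hi1 hi'
    have hw : a k ∈ A := hmem k hk1 hk2
    have hcu : c (a i) ∈ A := hcA _ hu
    have hcv : c (a (i+1)) ∈ A := hcA _ hv
    have hcw : c (a k) ∈ A := hcA _ hw
    have hccu : c (c (a i)) ∈ A := hcA _ hcu
    have hccv : c (c (a (i+1))) ∈ A := hcA _ hcv
    have E1 : a i * c (a k) = a k * c (a i) := E i k hi hii hk1 hk2 hdik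
    have E2 : a (i+1) * c (a k) = a k * c (a (i+1)) := E (i+1) k hi1 hi' hk1 hk2 hdik1
    have S1 : c (a i) * a (i+1) = c (a (i+1)) * a i := by
      have hmain : a k * (c (a i) * a (i+1)) = a k * (c (a (i+1)) * a i) := by
        calc a k * (c (a i) * a (i+1))
            = (a k * c (a i)) * a (i+1) := (mul_assoc _ _ _).symm
          _ = (a i * c (a k)) * a (i+1) := by rw [← E1]
          _ = a i * (c (a k) * a (i+1)) := mul_assoc _ _ _
          _ = a i * (a (i+1) * c (a k)) := by rw [habel _ hcw _ hv]
          _ = (a i * a (i+1)) * c (a k) := (mul_assoc _ _ _).symm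
          _ = (a (i+1) * a i) * c (a k) := by rw [habel _ hu _ hv]
          _ = a (i+1) * (a i * c (a k)) := mul_assoc _ _ _
          _ = a (i+1) * (c (a k) * a i) := by rw [habel _ hu _ hcw]
          _ = (a (i+1) * c (a k)) * a i := (mul_assoc _ _ _).symm
          _ = (a k * c (a (i+1))) * a i := by rw [E2]
          _ = a k * (c (a (i+1)) * a i) := mul_assoc _ _ _
      exact mul_left_cancel hmain
    have S2 : c (c (a i)) * c (a (i+1)) = c (c (a (i+1))) * c (a i) := by
      rw [← hchom, ← hchom, S1]
    have hB := B i hi hin2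
    have h1 : a i * c (a (i+1)) * c (c (a i)) =
        a i * (c (c (a (i+1))) * c (a i)) := by
      rw [mul_assoc (a i), habel _ hcv _ hccu, S2]
    have h2 : a (i+1) * c (a i) * c (c (a (i+1))) =
        a (i+1) * (c (c (a (i+1))) * c (a i)) := by
      rw [mul_assoc (a (i+1)), habel _ hcu _ hccv]
    have fin : a i * (c (c (a (i+1))) * c (a i)) =
        a (i+1) * (c (c (a (i+1))) * c (a i)) := h1.symm.trans (hB.trans h2)
    have hav : a i = a (i+1) := mul_right_cancel fin
    have : h i * t⁻¹ = h (i+1) * t⁻¹ := hav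
    exact mul_right_cancel this
  have toOne : ∀ i, 1 ≤ i → i ≤ n - 1 → h i = h 1 := by
    intro i
    induction i with
    | zero => exact fun h1 _ => absurd h1 (by omega)
    | succ i ih =>
      intro h1 h2
      rcases Nat.eq_zero_or_pos i with h0 | hpos
      · subst h0; rfl
      · rw [← adj i hpos h2]; exact ih hpos (by omega)
  intro i j hi hi' hj hj'
  rw [toOne i hi hi', toOne j hj hj']

/-- Proposition 2.9: for `n ≥ 6`, every homomorphism from the braid group
`B_n` to a solvable group is constant. -/
theorem braid_constant_of_solvable
    (n : ℕ) (hn : 6 ≤ n) (G : Type*) [Group G] [Group.IsSolvable G] (g : ℕ → G)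
    (hbraid : ∀ i, 1 ≤ i → i ≤ n - 2 →
      g i * g (i + 1) * g i = g (i + 1) * g i * g (i + 1))
    (hcomm : ∀ i j, 1 ≤ i → i ≤ n - 1 → 1 ≤ j → j ≤ n - 1 →
      2 ≤ |(i : ℤ) - (j : ℤ)| → g i * g j = g j * g i) :
    ∀ i j, 1 ≤ i → i ≤ n - 1 → 1 ≤ j → j ≤ n - 1 → g i = g j := by
  obtain ⟨m, hm⟩ := Group.IsSolvable.solvable (G := G)
  suffices H : ∀ m', ∀ i j, 1 ≤ i → i ≤ n - 1 → 1 ≤ j → j ≤ n - 1 →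
      g i * (g j)⁻¹ ∈ derivedSeries G m' by
    intro i j hi hi' hj hj'
    have hmem := H m i j hi hi' hj hj'
    rw [hm, Subgroup.mem_bot] at hmem
    exact mul_inv_eq_one.mp hmem
  intro m'
  induction m' with
  | zero =>
    intro i j _ _ _ _
    rw [derivedSeries_zero]
    exact Subgroup.mem_top _
  | succ m' ih =>
    intro i j hi hi' hj hj'
    set N := derivedSeries G (m' + 1) with hN
    haveI : N.Normal := derivedSeries_normal G (m' + 1)
    let π : G →* G ⧸ N := QuotientGroup.mk' N
    have hπ1 : ∀ x : G, x ∈ N → π x = 1 := fun x hx =>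
      (QuotientGroup.eq_one_iff x).mpr hx
    -- the image of the previous derived subgroup
    set A : Subgroup (G ⧸ N) := (derivedSeries G m').map π with hA
    have hAn : ∀ x ∈ A, ∀ q : G ⧸ N, q * x * q⁻¹ ∈ A := by
      intro x hx q
      obtain ⟨x', hx', rfl⟩ := hx
      obtain ⟨q', rfl⟩ := QuotientGroup.mk'_surjective N q
      refine ⟨q' * x' * q'⁻¹, ?_, by simp only [map_mul, map_inv]; rfl⟩
      exact (derivedSeries_normal G m').conj_mem x' hx' q'
    have habel : ∀ x ∈ A, ∀ y ∈ A, x * y = y * x := by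
      intro x hx y hy
      obtain ⟨x', hx', rfl⟩ := hx
      obtain ⟨y', hy', rfl⟩ := hy
      have hcm : ⁅x', y'⁆ ∈ N := by
        rw [hN, derivedSeries_succ]
        exact Subgroup.commutator_mem_commutator hx' hy'
      have h1 : π ⁅x', y'⁆ = 1 := hπ1 _ hcm
      rw [commutatorElement_def] at h1
      simp only [map_mul, map_inv] at h1
      calc π x' * π y' = (π x' * π y' * (π x')⁻¹ * (π y')⁻¹) * (π y' * π x') := by group
        _ = 1 * (π y' * π x') := by rw [h1]
        _ = π y' * π x' := one_mul _
    have key := braid_key (G ⧸ N) A hAn habel n hn (π (g 1)) (fun i => π (g i))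
      (fun i h1 h2 => by
        show π (g i) * (π (g 1))⁻¹ ∈ A
        rw [← map_inv, ← map_mul]
        exact ⟨g i * (g 1)⁻¹, ih i 1 h1 h2 le_rfl (by omega), rfl⟩)
      (fun i h1 h2 => by
        show π (g i) * π (g (i+1)) * π (g i) = π (g (i+1)) * π (g i) * π (g (i+1))
        simp only [← map_mul]
        rw [hbraid i h1 h2])
      (fun i j h1 h2 h3 h4 h5 => by
        show π (g i) * π (g j) = π (g j) * π (g i)
        simp only [← map_mul]
        rw [hcomm i j h1 h2 h3 h4 h5])
    have hkey : π (g i) = π (g j) := key i j hi hi' hj hj'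
    have : π (g i * (g j)⁻¹) = 1 := by
      rw [map_mul, map_inv, hkey, mul_inv_cancel]
    exact (QuotientGroup.eq_one_iff _).mp this
end

section
/- Let K be a field, let V be a finite-dimensional vector space over K, let W ⊆ V be a linear subspace, and let T : V → V be an invertible linear transformation. Define d_0 := dim V and, for k ≥ 1, d_k := dim(W ∩ T(W) ∩ T²(W) ∩ ⋯ ∩ T^{k−1}(W)). Then the sequence d_0, d_1, d_2, … is weakly convex: for all m ≥ 1, d_m − d_{m+1} ≥ d_{m+1} − d_{m+2}. -/
theorem aux_map_pow_succ
    (K : Type*) [Field K] (V : Type*) [AddCommGroup V] [Module K V]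
    (W : Submodule K V) (T : V ≃ₗ[K] V) (j : ℕ) :
    (W.map ((T ^ j : V ≃ₗ[K] V) : V →ₗ[K] V)).map (T : V →ₗ[K] V)
      = W.map ((T ^ (j+1) : V ≃ₗ[K] V) : V →ₗ[K] V) := by
  rw [← Submodule.map_comp]
  congr 1
  ext x
  simp [pow_succ']

/-- Lemma 3.2: for an invertible linear transformation `T` of a
finite-dimensional vector space `V` and a subspace `W`, the sequence
`d 0 = dim V`, `d k = dim (W ∩ T(W) ∩ ⋯ ∩ T^{k-1}(W))` is weakly convex. -/
theorem dims_of_iterated_intersection_weakly_convex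
    (K : Type*) [Field K] (V : Type*) [AddCommGroup V] [Module K V]
    [FiniteDimensional K V]
    (W : Submodule K V) (T : V ≃ₗ[K] V)
    (d : ℕ → ℕ)
    (hd0 : d 0 = Module.finrank K V)
    (hd : ∀ k, 1 ≤ k →
      d k = Module.finrank K
        ↥(⨅ j ∈ Finset.range k, W.map ((T ^ j : V ≃ₗ[K] V) : V →ₗ[K] V))) :
    ∀ m, 1 ≤ m → (d m : ℤ) - (d (m + 1) : ℤ) ≥ (d (m + 1) : ℤ) - (d (m + 2) : ℤ) := by
  intro m hm
  set f : ℕ → Submodule K V := fun j => W.map ((T ^ j : V ≃ₗ[K] V) : V →ₗ[K] V) with hf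
  set U : ℕ → Submodule K V := fun k => ⨅ j ∈ Finset.range k, f j with hU
  have memU : ∀ k x, x ∈ U k ↔ ∀ j < k, x ∈ f j := by
    intro k x
    simp [hU, Submodule.mem_iInf]
  -- map of U k under T
  have mapU : ∀ k x, x ∈ (U k).map (T : V →ₗ[K] V) ↔ ∀ j < k, x ∈ f (j+1) := by
    intro k x
    rw [Submodule.mem_map_equiv, memU]
    constructor
    · intro h j hj
      have := h j hj
      simp only [hf]
      rw [← aux_map_pow_succ K V W T j]
      exact ⟨T.symm x, this, by simp⟩
    · intro h j hj
      have := h j hj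
      simp only [hf] at this ⊢
      rw [← aux_map_pow_succ K V W T j] at this
      obtain ⟨y, hy, hyx⟩ := this
      have : y = T.symm x := by
        apply_fun T.symm at hyx; simpa using hyx
      rwa [← this]
  set A := U (m+1) with hA
  set B := (U (m+1)).map (T : V →ₗ[K] V) with hB
  have hinf : A ⊓ B = U (m+2) := by
    ext x
    simp only [Submodule.mem_inf, memU, hA, hB, mapU]
    constructor
    · rintro ⟨h1, h2⟩ j hj
      rcases Nat.eq_zero_or_eq_succ_pred j with h | h
      · subst h; exact h1 0 (by omega)
      · rw [h]; exact h2 (j-1) (by omega)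
    · intro h
      exact ⟨fun j hj => h j (by omega), fun j hj => h (j+1) (by omega)⟩
  have hsup : A ⊔ B ≤ (U m).map (T : V →ₗ[K] V) := by
    apply sup_le
    · intro x hx
      rw [mapU]
      rw [hA, memU] at hx
      exact fun j hj => hx (j+1) (by omega)
    · intro x hx
      rw [hB, mapU] at hx
      rw [mapU]
      exact fun j hj => hx j (by omega)
  have key : Module.finrank K ↥(A ⊔ B) + Module.finrank K ↥(A ⊓ B)
      = Module.finrank K A + Module.finrank K B :=
    Submodule.finrank_sup_add_finrank_inf_eq A B
  have hBrank : Module.finrank K B = Module.finrank K A :=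
    LinearEquiv.finrank_map_eq T (U (m+1))
  have hsuprank : Module.finrank K ↥(A ⊔ B) ≤ Module.finrank K (U m) := by
    calc Module.finrank K ↥(A ⊔ B) ≤ Module.finrank K ↥((U m).map (T : V →ₗ[K] V)) :=
          Submodule.finrank_mono hsup
      _ = Module.finrank K (U m) := LinearEquiv.finrank_map_eq T (U m)
  have hdm : d m = Module.finrank K (U m) := hd m hm
  have hdm1 : d (m+1) = Module.finrank K A := hd (m+1) (by omega)
  have hdm2 : d (m+2) = Module.finrank K ↥(A ⊓ B) := by rw [hinf]; exact hd (m+2) (by omega)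
  rw [hdm, hdm1, hdm2]
  rw [hBrank] at key
  omega
end

section
/- Let G be a finite group which is not solvable, and let K be a normal subgroup of G maximal among normal subgroups with non-solvable quotient (i.e., G/K is not solvable, and for every normal subgroup K′ of G properly containing K, the quotient G/K′ is solvable). Then G/K is almost characteristically simple: there exist a nonabelian finite simple group H and a positive integer k such that G/K contains a normal subgroup N isomorphic to the direct power H^k whose centralizer in G/K is trivial; equivalently, the conjugation action gives embeddings H^k ≤ G/K ≤ Aut(H^k). -/
open Subgroup

/-- A minimal normal subgroup. -/
def IsMinNormal {X : Type*} [Group X] (P : Subgroup X) : Prop :=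
  P.Normal ∧ P ≠ ⊥ ∧ ∀ T : Subgroup X, T.Normal → T ≠ ⊥ → T ≤ P → T = P

lemma top_ne_bot' (X : Type*) [Group X] [Nontrivial X] : (⊤ : Subgroup X) ≠ ⊥ := by
  intro h
  obtain ⟨x, hx⟩ := exists_ne (1 : X)
  have : x ∈ (⊥ : Subgroup X) := h ▸ Subgroup.mem_top x
  exact hx (Subgroup.mem_bot.mp this)

lemma exists_isMinNormal (X : Type*) [Group X] [Finite X] [Nontrivial X] :
    ∃ P : Subgroup X, IsMinNormal P := by
  haveI : Finite (Subgroup X) :=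
    Finite.of_injective (fun H : Subgroup X => (H : Set X)) SetLike.coe_injective
  obtain ⟨P, ⟨hPn, hPb⟩, hmin⟩ :=
    Set.Finite.exists_minimalFor id {M : Subgroup X | M.Normal ∧ M ≠ ⊥}
      (Set.toFinite _) ⟨⊤, ⟨inferInstance, top_ne_bot' X⟩⟩
  exact ⟨P, hPn, hPb, fun T hTn hTb hle => le_antisymm hle (hmin ⟨hTn, hTb⟩ hle)⟩

lemma IsMinNormal.map {X : Type*} [Group X] {P : Subgroup X} (h : IsMinNormal P)
    (e : X ≃* X) : IsMinNormal (P.map e.toMonoidHom) := by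
  obtain ⟨hn, hb, hm⟩ := h
  have hker : e.toMonoidHom.ker = ⊥ := by
    ext x; simp [MonoidHom.mem_ker, e.injective.eq_iff' e.map_one]
  have hker' : e.symm.toMonoidHom.ker = ⊥ := by
    ext x; simp [MonoidHom.mem_ker, e.symm.injective.eq_iff' e.symm.map_one]
  have hcomp : ∀ T : Subgroup X, (T.map e.toMonoidHom).map e.symm.toMonoidHom = T := by
    intro T
    rw [Subgroup.map_map]
    convert Subgroup.map_id T
    ext x; simp
  refine ⟨hn.map _ e.surjective, ?_, ?_⟩
  · rw [Ne, Subgroup.map_eq_bot_iff, hker, le_bot_iff]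
    exact hb
  · intro T hTn hTb hTle
    have h1 : T.map e.symm.toMonoidHom ≤ P := by
      have := Subgroup.map_mono (f := e.symm.toMonoidHom) hTle
      rwa [hcomp] at this
    have h2 : T.map e.symm.toMonoidHom = P := by
      refine hm _ (hTn.map _ e.symm.surjective) ?_ h1
      rw [Ne, Subgroup.map_eq_bot_iff, hker', le_bot_iff]
      exact hTb
    calc T = (T.map e.symm.toMonoidHom).map e.toMonoidHom := by
            rw [Subgroup.map_map]
            symm
            convert Subgroup.map_id T using 2
            ext x; simp
      _ = P.map e.toMonoidHom := by rw [h2]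

lemma finsetSup_normal {X : Type*} [Group X] (F : Finset (Subgroup X))
    (h : ∀ T ∈ F, T.Normal) : (F.sup id).Normal := by
  classical
  induction F using Finset.induction_on with
  | empty => simpa using (inferInstance : (⊥ : Subgroup X).Normal)
  | @insert T F' hnotmem ih =>
    rw [Finset.sup_insert]
    haveI : T.Normal := h T (Finset.mem_insert_self T F')
    haveI : (F'.sup id).Normal := ih fun U hU => h U (Finset.mem_insert_of_mem hU)
    exact Subgroup.sup_normal T (F'.sup id)

open scoped Classical in
lemma exists_min_subcover {X : Type*} [Group X] :
    ∀ F : Finset (Subgroup X), F.sup id = ⊤ →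
      ∃ F' ⊆ F, F'.sup id = ⊤ ∧ ∀ T ∈ F', ¬ T ≤ (F'.erase T).sup id := by
  intro F
  induction F using Finset.strongInduction with
  | _ F ih =>
    intro hsup
    by_cases h : ∃ T ∈ F, T ≤ (F.erase T).sup id
    · obtain ⟨T, hTF, hTle⟩ := h
      have hsup' : (F.erase T).sup id = ⊤ := by
        have : F.sup id = (F.erase T).sup id := by
          conv_lhs => rw [← Finset.insert_erase hTF]
          rw [Finset.sup_insert]
          exact sup_eq_right.mpr hTle
        rw [← this, hsup]
      obtain ⟨F', hsub, h1, h2⟩ := ih (F.erase T) (Finset.erase_ssubset hTF) hsup'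
      exact ⟨F', hsub.trans (Finset.erase_subset T F), h1, h2⟩
    · push_neg at h
      exact ⟨F, le_refl _, hsup, h⟩

lemma factor_simple {X : Type*} [Group X] (F : Finset (Subgroup X)) [DecidableEq (Subgroup X)]
    (hFsup : F.sup id = ⊤)
    (hFminN : ∀ T ∈ F, IsMinNormal T)
    (hcomm' : ∀ T ∈ F, ∀ T' ∈ F, T ≠ T' → ∀ x y : X, x ∈ T → y ∈ T' → Commute x y)
    (T : Subgroup X) (hT : T ∈ F) : IsSimpleGroup ↥T := by
  haveI : Nontrivial ↥T := (Subgroup.nontrivial_iff_ne_bot T).mpr (hFminN T hT).2.1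
  constructor
  intro U hU
  set U' := U.map T.subtype with hU'
  have hU'le : U' ≤ T := Subgroup.map_subtype_le U
  have hone : ∀ T'' ∈ F, ∀ t ∈ T'', ∀ u ∈ U', t * u * t⁻¹ ∈ U' := by
    intro T'' hT'' t ht u hu
    by_cases hTT : T'' = T
    · subst hTT
      obtain ⟨v, hv, rfl⟩ := Subgroup.mem_map.mp hu
      exact Subgroup.mem_map.mpr ⟨⟨t, ht⟩ * v * ⟨t, ht⟩⁻¹, hU.conj_mem v hv ⟨t, ht⟩, rfl⟩
    · have hcw : Commute t u := hcomm' T'' hT'' T hT hTT t u ht (hU'le hu)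
      have : t * u * t⁻¹ = u := by rw [hcw.eq]; group
      rwa [this]
  have hU'n : U'.Normal := by
    rw [← Subgroup.normalizer_eq_top_iff, eq_top_iff, ← hFsup]
    refine Finset.sup_le fun T'' hT'' => ?_
    intro t ht
    simp only [id] at ht
    rw [Subgroup.mem_normalizer_iff]
    intro u
    constructor
    · exact fun hu => hone T'' hT'' t ht u hu
    · intro hu
      have h2 := hone T'' hT'' t⁻¹ (inv_mem ht) _ hu
      have h3 : t⁻¹ * (t * u * t⁻¹) * t⁻¹⁻¹ = u := by group
      rwa [h3] at h2
  by_cases hU'b : U' = ⊥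
  · left
    have : U ≤ ⊥ := by
      rw [← Subgroup.ker_subtype T, ← Subgroup.map_eq_bot_iff]
      exact hU'b
    exact le_bot_iff.mp this
  · right
    have hU'T : U' = T := (hFminN T hT).2.2 U' hU'n hU'b hU'le
    have : U.map T.subtype = (⊤ : Subgroup ↥T).map T.subtype := by
      rw [← hU', hU'T, ← MonoidHom.range_eq_map, Subgroup.range_subtype]
    exact Subgroup.map_injective T.subtype_injective this

lemma assemble {X : Type*} [Group X] [Nontrivial X]
    (F : Finset (Subgroup X)) [DecidableEq (Subgroup X)]
    (hFsup : F.sup id = ⊤)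
    (hFminN : ∀ T ∈ F, IsMinNormal T)
    (hdisj : ∀ T ∈ F, T ⊓ (F.erase T).sup id = ⊥)
    (hcomm' : ∀ T ∈ F, ∀ T' ∈ F, T ≠ T' → ∀ x y : X, x ∈ T → y ∈ T' → Commute x y)
    (hsimple : ∀ T ∈ F, IsSimpleGroup ↥T)
    (S : Subgroup X)
    (hiso : ∀ T ∈ F, Nonempty (↥T ≃* ↥S)) :
    IsSimpleGroup ↥S ∧ ∃ k : ℕ, 1 ≤ k ∧ Nonempty (X ≃* (Fin k → ↥S)) := by
  classical
  have hFne : F.Nonempty := by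
    rcases F.eq_empty_or_nonempty with rfl | h
    · exfalso; exact top_ne_bot' X (by simpa using hFsup.symm)
    · exact h
  set k := F.card with hk
  have hk1 : 1 ≤ k := Finset.card_pos.mpr hFne
  set e := F.equivFin with he
  set f : Fin k → Subgroup X := fun i => (e.symm i : _) with hf
  have hfF : ∀ i, f i ∈ F := fun i => (e.symm i).2
  have hfinj : Function.Injective f := by
    intro i j hij
    have : e.symm i = e.symm j := Subtype.ext hij
    exact e.symm.injective this
  have hcomm : Pairwise fun i j : Fin k => ∀ x y : X, x ∈ f i → y ∈ f j → Commute x y := by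
    intro i j hij
    exact hcomm' (f i) (hfF i) (f j) (hfF j) (fun h => hij (hfinj h))
  have hind : iSupIndep f := by
    intro i
    have h1 : (⨆ (j) (_ : j ≠ i), f j) ≤ (F.erase (f i)).sup id := by
      refine iSup_le fun j => iSup_le fun hj => ?_
      exact Finset.le_sup (f := id)
        (Finset.mem_erase.mpr ⟨fun h => hj (hfinj h), hfF j⟩)
    exact (disjoint_iff.mpr (hdisj (f i) (hfF i))).mono_right h1
  have hrange : (⨆ i, f i) = ⊤ := by
    rw [← hFsup]
    apply le_antisymm
    · exact iSup_le fun i => Finset.le_sup (f := id) (hfF i)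
    · refine Finset.sup_le fun T hT => ?_
      have hTf : T = f (e ⟨T, hT⟩) := by simp [hf]
      exact le_of_eq_of_le hTf (le_iSup f (e ⟨T, hT⟩))
  let φ := Subgroup.noncommPiCoprod hcomm
  have hinj : Function.Injective φ := Subgroup.injective_noncommPiCoprod_of_iSupIndep hind
  have hsurj : Function.Surjective φ := by
    rw [← MonoidHom.range_eq_top, Subgroup.noncommPiCoprod_range]
    exact hrange
  let eqN : (∀ i, ↥(f i)) ≃* X := MulEquiv.ofBijective φ ⟨hinj, hsurj⟩
  have hSsimple : IsSimpleGroup ↥S := by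
    obtain ⟨ψ⟩ := hiso (f ⟨0, hk1⟩) (hfF _)
    haveI := hsimple (f ⟨0, hk1⟩) (hfF _)
    haveI : Nontrivial ↥S := ψ.toEquiv.symm.nontrivial
    exact IsSimpleGroup.isSimpleGroup_of_surjective ψ.toMonoidHom ψ.surjective
  exact ⟨hSsimple, k, hk1,
    ⟨eqN.symm.trans (MulEquiv.piCongrRight fun i => (hiso (f i) (hfF i)).some)⟩⟩

set_option maxHeartbeats 1000000 in
lemma minimal_normal_struct {Q : Type*} [Group Q] [Finite Q] (N : Subgroup Q) [N.Normal]
    (hbot : N ≠ ⊥)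
    (hmin : ∀ M : Subgroup Q, M.Normal → M ≠ ⊥ → M ≤ N → M = N) :
    ∃ S : Subgroup ↥N, IsSimpleGroup ↥S ∧
      ∃ k : ℕ, 1 ≤ k ∧ Nonempty (↥N ≃* (Fin k → ↥S)) := by
  classical
  haveI : Nontrivial ↥N := (Subgroup.nontrivial_iff_ne_bot N).mpr hbot
  obtain ⟨S, hS⟩ := exists_isMinNormal ↥N
  set c : Q → Subgroup ↥N := fun q => S.map (MulAut.conjNormal q).toMonoidHom with hc
  have hcmin : ∀ q, IsMinNormal (c q) := fun q => hS.map _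
  have hconj_mem : ∀ (g : Q) (T : Subgroup ↥N), (∃ q, c q = T) →
      ∃ q, c q = T.map (MulAut.conjNormal g).toMonoidHom := by
    rintro g T ⟨q, rfl⟩
    refine ⟨g * q, ?_⟩
    rw [hc]
    simp only
    rw [Subgroup.map_map]
    congr 1
    ext x
    simp [map_mul]
  have hsupc : (⨆ q : Q, c q) = ⊤ := by
    set M : Subgroup ↥N := ⨆ q : Q, c q with hM
    have hMJ : ∀ g : Q, M.map (MulAut.conjNormal g).toMonoidHom = M := by
      intro g
      rw [hM, Subgroup.map_iSup]
      apply le_antisymm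
      · refine iSup_le fun q => ?_
        obtain ⟨r, hr⟩ := hconj_mem g (c q) ⟨q, rfl⟩
        rw [← hr]
        exact le_iSup c r
      · refine iSup_le fun q => ?_
        obtain ⟨r, hr⟩ := hconj_mem g⁻¹ (c q) ⟨q, rfl⟩
        have h2 : c q = (c r).map (MulAut.conjNormal g).toMonoidHom := by
          rw [hr, Subgroup.map_map]
          symm
          convert Subgroup.map_id (c q)
          ext x
          simp [← map_mul]
        rw [h2]
        exact le_iSup (fun q => (c q).map (MulAut.conjNormal g).toMonoidHom) r
    have hMn : (M.map N.subtype).Normal := by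
      constructor
      rintro a ha g
      obtain ⟨y, hy, rfl⟩ := Subgroup.mem_map.mp ha
      refine Subgroup.mem_map.mpr ⟨MulAut.conjNormal g y, ?_, ?_⟩
      · rw [← hMJ g]
        exact Subgroup.mem_map_of_mem _ hy
      · simp [MulAut.conjNormal_apply]
    have hMb : M.map N.subtype ≠ ⊥ := by
      rw [Ne, Subgroup.map_eq_bot_iff, Subgroup.ker_subtype, le_bot_iff, hM]
      intro h
      exact (hcmin 1).2.1 (le_bot_iff.mp (h ▸ le_iSup c 1))
    have hMN : M.map N.subtype = N := hmin _ hMn hMb (Subgroup.map_subtype_le M)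
    have htop : M.map N.subtype = (⊤ : Subgroup ↥N).map N.subtype := by
      rw [hMN, ← MonoidHom.range_eq_map, Subgroup.range_subtype]
    exact Subgroup.map_injective N.subtype_injective htop
  -- pick a minimal finite subfamily of conjugates covering ⊤
  have hfin : (Set.range c).Finite := Set.finite_range c
  have hF0 : hfin.toFinset.sup id = ⊤ := by
    rw [← hsupc]
    apply le_antisymm
    · refine Finset.sup_le fun T hT => ?_
      obtain ⟨q, rfl⟩ := (Set.Finite.mem_toFinset hfin).mp hT
      exact le_iSup c q
    · exact iSup_le fun q =>
        Finset.le_sup (f := id) ((Set.Finite.mem_toFinset hfin).mpr ⟨q, rfl⟩)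
  obtain ⟨F, hFsub, hFsup, hFmin⟩ := exists_min_subcover _ hF0
  have hmem : ∀ T ∈ F, ∃ q, c q = T := fun T hT => by
    have := hFsub hT; rw [Set.Finite.mem_toFinset] at this; exact this
  have hFminN : ∀ T ∈ F, IsMinNormal T := fun T hT => by
    obtain ⟨q, rfl⟩ := hmem T hT; exact hcmin q
  have hdisj : ∀ T ∈ F, T ⊓ (F.erase T).sup id = ⊥ := by
    intro T hT
    have hn : (T ⊓ (F.erase T).sup id).Normal := by
      haveI := (hFminN T hT).1
      haveI := finsetSup_normal (F.erase T)
        (fun U hU => (hFminN U (Finset.mem_of_mem_erase hU)).1)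
      infer_instance
    by_contra hne
    have heq := (hFminN T hT).2.2 _ hn hne inf_le_left
    exact hFmin T hT (inf_eq_left.mp heq)
  have hcomm' : ∀ T ∈ F, ∀ T' ∈ F, T ≠ T' → ∀ x y : ↥N, x ∈ T → y ∈ T' → Commute x y := by
    intro T hT T' hT' hne x y hx hy
    refine Subgroup.commute_of_normal_of_disjoint T T' (hFminN T hT).1 (hFminN T' hT').1
      ?_ x y hx hy
    have hle : T' ≤ (F.erase T).sup id :=
      Finset.le_sup (f := id) (Finset.mem_erase.mpr ⟨hne.symm, hT'⟩)
    rw [disjoint_iff]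
    exact le_bot_iff.mp ((inf_le_inf_left T hle).trans (hdisj T hT).le)
  have hsimple : ∀ T ∈ F, IsSimpleGroup ↥T :=
    fun T hT => factor_simple F hFsup hFminN hcomm' T hT
  have hiso : ∀ T ∈ F, Nonempty (↥T ≃* ↥S) := by
    intro T hT
    obtain ⟨q, hq⟩ := hmem T hT
    exact ⟨(MulEquiv.subgroupCongr hq.symm).trans
      (Subgroup.equivMapOfInjective S _ (MulAut.conjNormal q).injective).symm⟩
  obtain ⟨h1, h2⟩ := assemble F hFsup hFminN hdisj hcomm' hsimple S hiso
  exact ⟨S, h1, h2⟩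

/-- Proposition 4.2: a minimal non-solvable quotient of a finite group is
almost characteristically simple: it has a normal subgroup isomorphic to
`H^k` (with `H` a nonabelian finite simple group, `k ≥ 1`) whose
centralizer is trivial. -/
theorem minimal_nonsolvable_quotient_almost_characteristically_simple
    (G : Type*) [Group G] [Finite G] (hG : ¬ IsSolvable G)
    (K : Subgroup G) [K.Normal] (hK : ¬ IsSolvable (G ⧸ K))
    (hmax : ∀ K' : Subgroup G, ∀ _ : K'.Normal, K < K' → IsSolvable (G ⧸ K')) :
    ∃ (H : Type) (_ : Group H) (_ : Finite H),
      IsSimpleGroup H ∧ (∃ a b : H, a * b ≠ b * a) ∧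
      ∃ k : ℕ, 1 ≤ k ∧
        ∃ N : Subgroup (G ⧸ K), N.Normal ∧
          Nonempty (N ≃* (Fin k → H)) ∧
          Subgroup.centralizer (N : Set (G ⧸ K)) = ⊥ := by
  classical
  -- any nontrivial normal subgroup of G⧸K has solvable quotient
  have hquot : ∀ (M : Subgroup (G ⧸ K)) [M.Normal], M ≠ ⊥ → IsSolvable ((G ⧸ K) ⧸ M) := by
    intro M hMn hMb
    set K' := M.comap (QuotientGroup.mk' K) with hK'
    haveI hK'n : K'.Normal := hMn.comap _
    have hMeq : M = K'.map (QuotientGroup.mk' K) :=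
      (Subgroup.map_comap_eq_self_of_surjective (QuotientGroup.mk'_surjective K) M).symm
    have hle : K ≤ K' := by
      intro x hx
      rw [hK', Subgroup.mem_comap]
      have : (QuotientGroup.mk' K) x = 1 := (QuotientGroup.eq_one_iff x).mpr hx
      rw [this]
      exact M.one_mem
    have hlt : K < K' := by
      refine lt_of_le_of_ne hle ?_
      intro heq
      apply hMb
      rw [hMeq, ← heq]
      rw [eq_bot_iff]
      intro y hy
      obtain ⟨x, hx, rfl⟩ := Subgroup.mem_map.mp hy
      rw [Subgroup.mem_bot]
      exact (QuotientGroup.eq_one_iff x).mpr hx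
    haveI : Group.IsSolvable (G ⧸ K') := hmax K' hK'n hlt
    have equiv := QuotientGroup.quotientQuotientEquivQuotient K K' hle
    haveI : (K'.map (QuotientGroup.mk' K)).Normal := hMeq ▸ hMn
    have equiv2 := (QuotientGroup.quotientMulEquivOfEq hMeq).trans equiv
    exact solvable_of_solvable_injective (f := equiv2.toMonoidHom) equiv2.injective
  haveI : Nontrivial (G ⧸ K) := by
    by_contra h
    rw [not_nontrivial_iff_subsingleton] at h
    exact hK (inferInstance : Group.IsSolvable (G ⧸ K))
  obtain ⟨N, hNn, hNb, hNmin⟩ := exists_isMinNormal (G ⧸ K)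
  haveI := hNn
  have hNnotsolv : ¬ IsSolvable ↥N := by
    intro hs
    haveI : Group.IsSolvable ↥N := hs
    haveI : Group.IsSolvable ((G ⧸ K) ⧸ N) := hquot N hNb
    exact hK (solvable_of_ker_le_range N.subtype (QuotientGroup.mk' N)
      (by rw [QuotientGroup.ker_mk', Subgroup.range_subtype]))
  obtain ⟨S, hSsimple, k, hk1, ⟨eiso⟩⟩ := minimal_normal_struct N hNb hNmin
  haveI := hSsimple
  -- S is nonabelian
  have hnc : ∃ a b : ↥S, a * b ≠ b * a := by
    by_contra h
    push_neg at h
    apply hNnotsolv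
    haveI : Group.IsSolvable (Fin k → ↥S) :=
      isSolvable_of_comm (fun a b => funext fun i => h _ _)
    exact solvable_of_solvable_injective (f := eiso.toMonoidHom) eiso.injective
  -- central elements of S are trivial
  have hScent : ∀ s : ↥S, (∀ t : ↥S, t * s = s * t) → s = 1 := by
    intro s hs
    have hcen : (Subgroup.center ↥S).Normal := inferInstance
    rcases hSsimple.eq_bot_or_eq_top_of_normal _ hcen with hbot | htop
    · have : s ∈ Subgroup.center ↥S := Subgroup.mem_center_iff.mpr hs
      rw [hbot] at this
      exact Subgroup.mem_bot.mp this
    · exfalso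
      obtain ⟨a, b, hab⟩ := hnc
      have ha : a ∈ Subgroup.center ↥S := htop ▸ Subgroup.mem_top a
      exact hab ((Subgroup.mem_center_iff.mp ha) b).symm
  -- the centralizer of N is trivial
  have hcent : Subgroup.centralizer (N : Set (G ⧸ K)) = ⊥ := by
    by_contra hC
    set C := Subgroup.centralizer (N : Set (G ⧸ K)) with hCdef
    have hCn : C.Normal := by
      constructor
      intro a ha g
      rw [hCdef, Subgroup.mem_centralizer_iff] at ha ⊢
      intro h hh
      have hh' : g⁻¹ * h * g ∈ N := by
        have := hNn.conj_mem h hh g⁻¹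
        simpa using this
      have key := ha _ hh'
      have := congrArg (fun z => g * z * g⁻¹) key
      simpa [mul_assoc] using this
    -- elements of C ∩ N are trivial
    have hCNtriv : ∀ x : G ⧸ K, x ∈ C → x ∈ N → x = 1 := by
      intro x hxC hxN
      set n : ↥N := ⟨x, hxN⟩ with hn
      have hcentral : ∀ m : ↥N, m * n = n * m := fun m =>
        Subtype.ext (Subgroup.mem_centralizer_iff.mp hxC m m.2)
      have hpc : ∀ y : Fin k → ↥S, y * eiso n = eiso n * y := by
        intro y
        have h0 := congrArg eiso (hcentral (eiso.symm y))
        simpa [map_mul] using h0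
      have hone : eiso n = 1 := by
        funext i
        apply hScent
        intro t
        have := congrFun (hpc (Pi.mulSingle i t)) i
        simpa using this
      have : n = 1 := by
        apply eiso.injective
        simpa using hone
      exact Subtype.ext_iff.mp this
    have hCsolv : Group.IsSolvable ↥C := by
      haveI : Group.IsSolvable ((G ⧸ K) ⧸ N) := hquot N hNb
      refine solvable_of_solvable_injective
        (f := (QuotientGroup.mk' N).comp C.subtype) ?_
      rw [← MonoidHom.ker_eq_bot_iff, eq_bot_iff]
      intro x hx
      rw [MonoidHom.mem_ker, MonoidHom.comp_apply] at hx
      have hxN : (x : G ⧸ K) ∈ N := (QuotientGroup.eq_one_iff _).mp hx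
      rw [Subgroup.mem_bot]
      exact Subtype.ext (hCNtriv x x.2 hxN)
    haveI := hCsolv
    haveI : Group.IsSolvable ((G ⧸ K) ⧸ C) := hquot C hC
    exact hK (solvable_of_ker_le_range C.subtype (QuotientGroup.mk' C)
      (by rw [QuotientGroup.ker_mk', Subgroup.range_subtype]))
  -- transfer the simple group to `Type 0`
  haveI hsmall : Small.{0} ↥S := ⟨⟨Fin (Nat.card ↥S), ⟨Finite.equivFin ↥S⟩⟩⟩
  let eHm : Shrink.{0} ↥S ≃* ↥S := Shrink.mulEquiv
  haveI : Finite (Shrink.{0} ↥S) := Finite.of_equiv ↥S eHm.symm.toEquiv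
  haveI : Nontrivial (Shrink.{0} ↥S) := eHm.toEquiv.nontrivial
  refine ⟨Shrink.{0} ↥S, inferInstance, inferInstance, ?_, ?_, k, hk1, N, hNn, ?_, hcent⟩
  · exact IsSimpleGroup.isSimpleGroup_of_surjective eHm.symm.toMonoidHom eHm.symm.surjective
  · obtain ⟨a, b, hab⟩ := hnc
    refine ⟨eHm.symm a, eHm.symm b, fun h => hab ?_⟩
    have := congrArg eHm h
    simpa [map_mul] using this
  · exact ⟨eiso.trans (MulEquiv.piCongrRight fun _ => eHm.symm)⟩
end
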